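/- (Temporal oscillation bound, Besov case) Let α ∈ (0,1), r ∈ [1,∞), and suppose [f]_r := ( ∫_0^T h^{−rα} ‖τ_h f‖_{L²}^r dh/h )^{1/r} < ∞. Then there exists a constant C, depending only on α and r (in particular independent of T, N, τ and f), such that (1/τ) · Σ_{n=1}^{N} ∫_ℝ ∫_ℝ a_n(s) a_n(t) ‖f(s) − f(t)‖_H² dt ds ≤ C · τ^{2α} · [f]_r². -/

import Mathlib

open MeasureTheory
open scoped ENNReal

/-- The interval `J_n`: `J_0 = [0, τ/2]` and `J_n = [nτ − τ/2, nτ + τ/2]` for `n ≥ 1`,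
where `τ = T/(N+1)`. -/
noncomputable def Jint (T : ℝ) (N : ℕ) (n : ℕ) : Set ℝ :=
  let τ := T / (N + 1)
  if n = 0 then Set.Icc 0 (τ / 2)
  else Set.Icc ((n : ℝ) * τ - τ / 2) ((n : ℝ) * τ + τ / 2)

/-- The weight functions `a_n` from the robust temporal discretization:
`a_1(t) = 1_{J_0}(t) + ((t_1 + τ/2 − t)/τ)·1_{J_1}(t)` and, for `n ≥ 2`,
`a_n(t) = ((t − (t_{n−1} − τ/2))/τ)·1_{J_{n−1}}(t) + ((t_n + τ/2 − t)/τ)·1_{J_n}(t)`,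
where `τ = T/(N+1)` and `t_n = nτ`. -/
noncomputable def aWeight (T : ℝ) (N : ℕ) (n : ℕ) (t : ℝ) : ℝ :=
  let τ := T / (N + 1)
  if n = 1 then
    (Jint T N 0).indicator (fun _ => (1 : ℝ)) t
      + (Jint T N 1).indicator (fun s => (τ + τ / 2 - s) / τ) t
  else
    (Jint T N (n - 1)).indicator (fun s => (s - (((n : ℝ) - 1) * τ - τ / 2)) / τ) t
      + (Jint T N n).indicator (fun s => ((n : ℝ) * τ + τ / 2 - s) / τ) t

/-- The temporal oscillation
`(1/τ) Σ_{n=1}^N ∫_ℝ ∫_ℝ a_n(s) a_n(t) ‖f(s) − f(t)‖² dt ds`. -/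
noncomputable def tempOsc (T : ℝ) (N : ℕ) {H : Type*} [NormedAddCommGroup H]
    (f : ℝ → H) : ℝ≥0∞ :=
  (ENNReal.ofReal (T / (N + 1)))⁻¹ *
    ∑ n ∈ Finset.Icc 1 N,
      ∫⁻ s, ∫⁻ t,
        ENNReal.ofReal (aWeight T N n s) * ENNReal.ofReal (aWeight T N n t)
          * ENNReal.ofReal (‖f s - f t‖ ^ 2) ∂(volume) ∂(volume)

/-- The squared `L²` norm of the time increment, `‖τ_h f‖_{L²}² = ∫_0^{T−h} ‖f(t+h) − f(t)‖² dt`. -/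
noncomputable def sqIncrementNorm (T : ℝ) {H : Type*} [NormedAddCommGroup H]
    (f : ℝ → H) (h : ℝ) : ℝ≥0∞ :=
  ∫⁻ t in Set.Ioc (0 : ℝ) (T - h), ENNReal.ofReal (‖f (t + h) - f t‖ ^ 2)

/-- The Besov seminorm `[f]_r := ( ∫_0^T h^{−rα} ‖τ_h f‖_{L²}^r dh/h )^{1/r}`. -/
noncomputable def besovSemi (T α r : ℝ) {H : Type*} [NormedAddCommGroup H]
    (f : ℝ → H) : ℝ≥0∞ :=
  (∫⁻ h in Set.Ioo (0 : ℝ) T,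
      ENNReal.ofReal h ^ (-(r * α) - 1)
        * (sqIncrementNorm T f h ^ ((1 : ℝ) / 2)) ^ r) ^ (1 / r)



section helpers
open Set

variable {H : Type*} [NormedAddCommGroup H]

lemma lint_shift (g : ℝ → ℝ≥0∞) (c : ℝ) : ∫⁻ x, g (x + c) = ∫⁻ x, g x :=
  lintegral_add_right_eq_self (μ := volume) g c

lemma lint_reflect (g : ℝ → ℝ≥0∞) (c : ℝ) : ∫⁻ x, g (c - x) = ∫⁻ x, g x := by
  have h1 : ∫⁻ x, g (c - x) = ∫⁻ x, (fun y => g (c + y)) (-x) := by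
    simp [sub_eq_add_neg]
  rw [h1]
  rw [(Measure.measurePreserving_neg (volume : Measure ℝ)).lintegral_comp_emb
      (MeasurableEquiv.neg ℝ).measurableEmbedding (fun y => g (c + y))]
  exact lintegral_add_left_eq_self (μ := volume) g c

lemma lint_shift_Icc (g : ℝ → ℝ≥0∞) (c a b : ℝ) :
    ∫⁻ x in Icc a b, g (x + c) = ∫⁻ x in Icc (a + c) (b + c), g x := by
  rw [← lintegral_indicator measurableSet_Icc, ← lintegral_indicator measurableSet_Icc]
  have h : ∀ x : ℝ, (Icc a b).indicator (fun x => g (x + c)) x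
      = (fun y => (Icc (a + c) (b + c)).indicator g y) (x + c) := by
    intro x
    simp only [Set.indicator_apply, mem_Icc]
    exact if_congr (by constructor <;> intro h <;> constructor <;> linarith [h.1, h.2]) rfl rfl
  simp_rw [h]
  exact lint_shift _ c

lemma lint_shift_Ioc (g : ℝ → ℝ≥0∞) (c a b : ℝ) :
    ∫⁻ x in Ioc a b, g (x + c) = ∫⁻ x in Ioc (a + c) (b + c), g x := by
  rw [← lintegral_indicator measurableSet_Ioc, ← lintegral_indicator measurableSet_Ioc]
  have h : ∀ x : ℝ, (Ioc a b).indicator (fun x => g (x + c)) x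
      = (fun y => (Ioc (a + c) (b + c)).indicator g y) (x + c) := by
    intro x
    simp only [Set.indicator_apply, mem_Ioc]
    exact if_congr (by constructor <;> intro h <;> constructor <;> linarith [h.1, h.2]) rfl rfl
  simp_rw [h]
  exact lint_shift _ c

lemma lint_reflect_Ioo (g : ℝ → ℝ≥0∞) (c a b : ℝ) :
    ∫⁻ x in Ioo a b, g (c - x) = ∫⁻ x in Ioo (c - b) (c - a), g x := by
  rw [← lintegral_indicator measurableSet_Ioo, ← lintegral_indicator measurableSet_Ioo]
  have h : ∀ x : ℝ, (Ioo a b).indicator (fun x => g (c - x)) x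
      = (fun y => (Ioo (c - b) (c - a)).indicator g y) (c - x) := by
    intro x
    simp only [Set.indicator_apply, mem_Ioo]
    exact if_congr (by constructor <;> intro h <;> constructor <;> linarith [h.1, h.2]) rfl rfl
  simp_rw [h]
  exact lint_reflect _ c

lemma measurable_pair {f : ℝ → H} (hf : StronglyMeasurable f) :
    Measurable (fun p : ℝ × ℝ => ENNReal.ofReal (‖f (p.1 + p.2) - f p.1‖ ^ 2)) := by
  have h1 : StronglyMeasurable (fun p : ℝ × ℝ => f (p.1 + p.2) - f p.1) :=
    (hf.comp_measurable (measurable_fst.add measurable_snd)).sub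
      (hf.comp_measurable measurable_fst)
  exact ENNReal.measurable_ofReal.comp ((h1.norm.measurable).pow_const 2)

lemma measurable_sqIncrementNorm (T : ℝ) {f : ℝ → H} (hf : StronglyMeasurable f) :
    Measurable (sqIncrementNorm T f) := by
  have hset : MeasurableSet {q : ℝ × ℝ | 0 < q.2 ∧ q.2 ≤ T - q.1} :=
    ((measurableSet_lt measurable_const measurable_snd).inter
      (measurableSet_le measurable_snd (measurable_const.sub measurable_fst)))
  have hk : Measurable (Function.uncurry fun (h : ℝ) (t : ℝ) =>
      ({q : ℝ × ℝ | 0 < q.2 ∧ q.2 ≤ T - q.1}).indicator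
        (fun q => ENNReal.ofReal (‖f (q.2 + q.1) - f q.2‖ ^ 2)) (h, t)) := by
    exact (measurable_pair hf |>.comp (measurable_snd.prodMk measurable_fst)).indicator hset
  have := Measurable.lintegral_prod_right (ν := (volume : Measure ℝ)) hk
  convert this using 1
  funext h
  rw [sqIncrementNorm, ← lintegral_indicator measurableSet_Ioc]
  refine lintegral_congr fun t => ?_
  simp only [Set.indicator_apply, mem_Ioc, mem_setOf_eq]

lemma sq_triangle (a b c : H) :
    ENNReal.ofReal (‖a - c‖ ^ 2)
      ≤ 2 * ENNReal.ofReal (‖a - b‖ ^ 2) + 2 * ENNReal.ofReal (‖b - c‖ ^ 2) := by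
  have h1 : ‖a - c‖ ≤ ‖a - b‖ + ‖b - c‖ := norm_sub_le_norm_sub_add_norm_sub a b c
  have h2 : ‖a - c‖ ^ 2 ≤ 2 * ‖a - b‖ ^ 2 + 2 * ‖b - c‖ ^ 2 := by
    have h3 : ‖a - c‖ ^ 2 ≤ (‖a - b‖ + ‖b - c‖) ^ 2 := by
      have := norm_nonneg (a - c)
      nlinarith
    nlinarith [sq_nonneg (‖a - b‖ - ‖b - c‖)]
  calc ENNReal.ofReal (‖a - c‖ ^ 2)
      ≤ ENNReal.ofReal (2 * ‖a - b‖ ^ 2 + 2 * ‖b - c‖ ^ 2) := ENNReal.ofReal_le_ofReal h2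
    _ = ENNReal.ofReal (2 * ‖a - b‖ ^ 2) + ENNReal.ofReal (2 * ‖b - c‖ ^ 2) :=
        ENNReal.ofReal_add (by positivity) (by positivity)
    _ = 2 * ENNReal.ofReal (‖a - b‖ ^ 2) + 2 * ENNReal.ofReal (‖b - c‖ ^ 2) := by
        rw [ENNReal.ofReal_mul (by norm_num), ENNReal.ofReal_mul (by norm_num)]
        norm_num

set_option maxHeartbeats 1000000 in
lemma sqIncrement_subadd {f : ℝ → H} (hf : StronglyMeasurable f) (T : ℝ)
    {h h' : ℝ} (h0 : 0 < h') (hh : h' < h) :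
    sqIncrementNorm T f h
      ≤ 2 * sqIncrementNorm T f h' + 2 * sqIncrementNorm T f (h - h') := by
  have hmeasA : Measurable (fun t : ℝ => ENNReal.ofReal (‖f (t + h) - f (t + h')‖ ^ 2)) := by
    have hm := (measurable_pair hf).comp
      ((measurable_id.add_const h').prodMk (measurable_const : Measurable fun _ : ℝ => h - h'))
    simp only [Function.comp_def, id_eq] at hm
    have heq : (fun t : ℝ => ENNReal.ofReal (‖f (t + h' + (h - h')) - f (t + h')‖ ^ 2))
        = fun t : ℝ => ENNReal.ofReal (‖f (t + h) - f (t + h')‖ ^ 2) := by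
      funext t; rw [show t + h' + (h - h') = t + h by ring]
    rwa [heq] at hm
  have hmeasB : Measurable (fun t : ℝ => ENNReal.ofReal (‖f (t + h') - f t‖ ^ 2)) :=
    (measurable_pair hf).comp (measurable_id.prodMk measurable_const)
  have step1 : sqIncrementNorm T f h
      ≤ ∫⁻ t in Ioc (0:ℝ) (T - h),
          (2 * ENNReal.ofReal (‖f (t + h) - f (t + h')‖ ^ 2)
            + 2 * ENNReal.ofReal (‖f (t + h') - f t‖ ^ 2)) := by
    refine lintegral_mono fun t => ?_
    exact sq_triangle (f (t + h)) (f (t + h')) (f t)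
  have step2 : ∫⁻ t in Ioc (0:ℝ) (T - h),
          (2 * ENNReal.ofReal (‖f (t + h) - f (t + h')‖ ^ 2)
            + 2 * ENNReal.ofReal (‖f (t + h') - f t‖ ^ 2))
      = 2 * (∫⁻ t in Ioc (0:ℝ) (T - h), ENNReal.ofReal (‖f (t + h) - f (t + h')‖ ^ 2))
        + 2 * (∫⁻ t in Ioc (0:ℝ) (T - h), ENNReal.ofReal (‖f (t + h') - f t‖ ^ 2)) := by
    rw [lintegral_add_left (hmeasA.const_mul 2),
      lintegral_const_mul' 2 _ (by norm_num), lintegral_const_mul' 2 _ (by norm_num)]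
  -- first integral ≤ S (h - h')
  have firstInt : (∫⁻ t in Ioc (0:ℝ) (T - h), ENNReal.ofReal (‖f (t + h) - f (t + h')‖ ^ 2))
      ≤ sqIncrementNorm T f (h - h') := by
    have hrw : ∀ t : ℝ, ENNReal.ofReal (‖f (t + h) - f (t + h')‖ ^ 2)
        = (fun u => ENNReal.ofReal (‖f (u + (h - h')) - f u‖ ^ 2)) (t + h') := by
      intro t; simp only
      have : t + h' + (h - h') = t + h := by ring
      rw [this]
    calc (∫⁻ t in Ioc (0:ℝ) (T - h), ENNReal.ofReal (‖f (t + h) - f (t + h')‖ ^ 2))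
        = ∫⁻ t in Ioc (0:ℝ) (T - h),
            (fun u => ENNReal.ofReal (‖f (u + (h - h')) - f u‖ ^ 2)) (t + h') :=
          lintegral_congr hrw
      _ = ∫⁻ u in Ioc (0 + h') (T - h + h'),
            ENNReal.ofReal (‖f (u + (h - h')) - f u‖ ^ 2) :=
          lint_shift_Ioc (fun u => ENNReal.ofReal (‖f (u + (h - h')) - f u‖ ^ 2)) h' 0 (T - h)
      _ ≤ ∫⁻ u in Ioc (0:ℝ) (T - (h - h')),
            ENNReal.ofReal (‖f (u + (h - h')) - f u‖ ^ 2) := by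
          apply lintegral_mono_set
          apply Ioc_subset_Ioc <;> linarith
      _ = sqIncrementNorm T f (h - h') := rfl
  have secondInt : (∫⁻ t in Ioc (0:ℝ) (T - h), ENNReal.ofReal (‖f (t + h') - f t‖ ^ 2))
      ≤ sqIncrementNorm T f h' := by
    apply lintegral_mono_set
    apply Ioc_subset_Ioc <;> linarith
  calc sqIncrementNorm T f h ≤ _ := step1
    _ = _ := step2
    _ ≤ 2 * sqIncrementNorm T f (h - h') + 2 * sqIncrementNorm T f h' := by
        gcongr
    _ = 2 * sqIncrementNorm T f h' + 2 * sqIncrementNorm T f (h - h') := by ring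

set_option maxHeartbeats 1000000 in
lemma stepA {α r T : ℝ} (hα : α ∈ Set.Ioo (0:ℝ) 1) (hr : 1 ≤ r)
    {f : ℝ → H} (hf : StronglyMeasurable f) {h : ℝ} (hh : h ∈ Set.Ioo (0:ℝ) T) :
    sqIncrementNorm T f h
      ≤ 64 * ENNReal.ofReal h ^ (2 * α) * besovSemi T α r f ^ (2:ℝ) := by
  obtain ⟨hh0, hhT⟩ := hh
  have hr0 : (0:ℝ) < r := lt_of_lt_of_le one_pos hr
  set S := sqIncrementNorm T f with hS
  set B := besovSemi T α r f with hB
  set p := r / 2 with hp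
  have hp0 : 0 < p := by positivity
  have hSmeas : Measurable S := measurable_sqIncrementNorm T hf
  have hSp : Measurable fun u => S u ^ p := hSmeas.pow_const p
  set K : ℝ≥0∞ := (4:ℝ≥0∞) ^ p with hK
  have hKne : K ≠ ⊤ := by
    exact ENNReal.rpow_ne_top_of_nonneg hp0.le (by norm_num)
  -- pointwise bound
  have key1 : ∀ h' ∈ Ioo (h/2) h,
      S h ^ p ≤ K * (S h' ^ p + S (h - h') ^ p) := by
    intro h' hh'
    obtain ⟨h1, h2⟩ := hh'
    have hsub := sqIncrement_subadd hf T (by linarith : 0 < h') h2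
    have hsup : S h ≤ 4 * (S h' ⊔ S (h - h')) := by
      calc S h ≤ 2 * S h' + 2 * S (h - h') := hsub
        _ ≤ 2 * (S h' ⊔ S (h - h')) + 2 * (S h' ⊔ S (h - h')) := by
            gcongr
            · exact le_sup_left
            · exact le_sup_right
        _ = 4 * (S h' ⊔ S (h - h')) := by ring
    calc S h ^ p ≤ (4 * (S h' ⊔ S (h - h'))) ^ p :=
          ENNReal.rpow_le_rpow hsup hp0.le
      _ = K * (S h' ⊔ S (h - h')) ^ p := by
          rw [ENNReal.mul_rpow_of_nonneg _ _ hp0.le]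
      _ ≤ K * (S h' ^ p + S (h - h') ^ p) := by
          gcongr
          rcases le_total (S h') (S (h - h')) with hc | hc
          · rw [sup_of_le_right hc]; exact le_add_self
          · rw [sup_of_le_left hc]; exact le_add_right (le_refl _)
  -- integrate over h' ∈ Ioo (h/2) h
  have key2 : ENNReal.ofReal (h/2) * S h ^ p
      ≤ K * 2 * ∫⁻ u in Ioo (0:ℝ) h, S u ^ p := by
    have e1 : ENNReal.ofReal (h/2) * S h ^ p = ∫⁻ _ in Ioo (h/2) h, S h ^ p := by
      rw [setLIntegral_const, Real.volume_Ioo, mul_comm]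
      congr 1
      congr 1
      ring
    rw [e1]
    have e2 : ∫⁻ h' in Ioo (h/2) h, S h ^ p
        ≤ ∫⁻ h' in Ioo (h/2) h, K * (S h' ^ p + S (h - h') ^ p) :=
      setLIntegral_mono' measurableSet_Ioo key1
    have e3 : ∫⁻ h' in Ioo (h/2) h, K * (S h' ^ p + S (h - h') ^ p)
        = K * ((∫⁻ h' in Ioo (h/2) h, S h' ^ p)
            + ∫⁻ h' in Ioo (h/2) h, S (h - h') ^ p) := by
      rw [lintegral_const_mul' K _ hKne, lintegral_add_left hSp]
    have e4 : (∫⁻ h' in Ioo (h/2) h, S (h - h') ^ p)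
        = ∫⁻ u in Ioo (0:ℝ) (h/2), S u ^ p := by
      have := lint_reflect_Ioo (fun u => S u ^ p) h (h/2) h
      rw [this]
      congr 2 <;> ring
    have e5 : (∫⁻ h' in Ioo (h/2) h, S h' ^ p) ≤ ∫⁻ u in Ioo (0:ℝ) h, S u ^ p :=
      lintegral_mono_set (Ioo_subset_Ioo (by linarith) le_rfl)
    have e6 : (∫⁻ u in Ioo (0:ℝ) (h/2), S u ^ p) ≤ ∫⁻ u in Ioo (0:ℝ) h, S u ^ p :=
      lintegral_mono_set (Ioo_subset_Ioo le_rfl (by linarith))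
    calc ∫⁻ h' in Ioo (h/2) h, S h ^ p ≤ _ := e2
      _ = _ := e3
      _ ≤ K * ((∫⁻ u in Ioo (0:ℝ) h, S u ^ p) + ∫⁻ u in Ioo (0:ℝ) h, S u ^ p) := by
          rw [e4]; gcongr
      _ = K * 2 * ∫⁻ u in Ioo (0:ℝ) h, S u ^ p := by ring
  -- the Besov bound on the tail integral
  have key3 : (∫⁻ u in Ioo (0:ℝ) h, S u ^ p)
      ≤ ENNReal.ofReal h ^ (r * α + 1) * B ^ r := by
    have point : ∀ u ∈ Ioo (0:ℝ) h, S u ^ p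
        ≤ ENNReal.ofReal h ^ (r * α + 1)
          * (ENNReal.ofReal u ^ (-(r * α) - 1) * (S u ^ ((1:ℝ)/2)) ^ r) := by
      intro u hu
      have hu0 : (0:ℝ) < u := hu.1
      have hune : ENNReal.ofReal u ≠ 0 := by
        simp [ENNReal.ofReal_eq_zero]; linarith
      have hunetop : ENNReal.ofReal u ≠ ⊤ := ENNReal.ofReal_ne_top
      have hcancel : ENNReal.ofReal u ^ (r * α + 1) * ENNReal.ofReal u ^ (-(r * α) - 1) = 1 := by
        rw [← ENNReal.rpow_add _ _ hune hunetop]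
        norm_num
      have hSp2 : S u ^ p = (S u ^ ((1:ℝ)/2)) ^ r := by
        rw [← ENNReal.rpow_mul]
        congr 1
        rw [hp]; ring
      calc S u ^ p = 1 * S u ^ p := (one_mul _).symm
        _ = ENNReal.ofReal u ^ (r * α + 1)
            * (ENNReal.ofReal u ^ (-(r * α) - 1) * (S u ^ ((1:ℝ)/2)) ^ r) := by
            rw [← hSp2, ← mul_assoc, hcancel]
        _ ≤ ENNReal.ofReal h ^ (r * α + 1)
            * (ENNReal.ofReal u ^ (-(r * α) - 1) * (S u ^ ((1:ℝ)/2)) ^ r) := by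
            have hexp : (0:ℝ) ≤ r * α + 1 := by nlinarith [mul_pos hr0 hα.1]
            exact mul_le_mul_left
              (ENNReal.rpow_le_rpow (ENNReal.ofReal_le_ofReal hu.2.le) hexp) _
    have hfin : (∫⁻ u in Ioo (0:ℝ) h,
        ENNReal.ofReal u ^ (-(r * α) - 1) * (S u ^ ((1:ℝ)/2)) ^ r)
        ≤ B ^ r := by
      have hsub : (∫⁻ u in Ioo (0:ℝ) h,
          ENNReal.ofReal u ^ (-(r * α) - 1) * (S u ^ ((1:ℝ)/2)) ^ r)
          ≤ ∫⁻ u in Ioo (0:ℝ) T,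
            ENNReal.ofReal u ^ (-(r * α) - 1) * (S u ^ ((1:ℝ)/2)) ^ r :=
        lintegral_mono_set (Ioo_subset_Ioo le_rfl hhT.le)
      have hBr : B ^ r = ∫⁻ u in Ioo (0:ℝ) T,
          ENNReal.ofReal u ^ (-(r * α) - 1) * (S u ^ ((1:ℝ)/2)) ^ r := by
        rw [hB, besovSemi, ← ENNReal.rpow_mul,
          show (1/r) * r = 1 by field_simp, ENNReal.rpow_one]
      rw [hBr]; exact hsub
    calc (∫⁻ u in Ioo (0:ℝ) h, S u ^ p)
        ≤ ∫⁻ u in Ioo (0:ℝ) h, ENNReal.ofReal h ^ (r * α + 1)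
            * (ENNReal.ofReal u ^ (-(r * α) - 1) * (S u ^ ((1:ℝ)/2)) ^ r) :=
          setLIntegral_mono' measurableSet_Ioo point
      _ = ENNReal.ofReal h ^ (r * α + 1)
            * ∫⁻ u in Ioo (0:ℝ) h,
              ENNReal.ofReal u ^ (-(r * α) - 1) * (S u ^ ((1:ℝ)/2)) ^ r :=
          lintegral_const_mul' _ _ (ENNReal.rpow_ne_top_of_nonneg
            (by nlinarith [mul_pos hr0 hα.1]) ENNReal.ofReal_ne_top)
      _ ≤ ENNReal.ofReal h ^ (r * α + 1) * B ^ r := by gcongr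
  -- divide by ofReal (h/2)
  have hc0 : ENNReal.ofReal (h/2) ≠ 0 := by
    simp [ENNReal.ofReal_eq_zero]; linarith
  have hctop : ENNReal.ofReal (h/2) ≠ ⊤ := ENNReal.ofReal_ne_top
  have key4 : S h ^ p ≤ 4 * K * (ENNReal.ofReal h ^ (r * α) * B ^ r) := by
    have hdiv : S h ^ p ≤ (ENNReal.ofReal (h/2))⁻¹
        * (K * 2 * (ENNReal.ofReal h ^ (r * α + 1) * B ^ r)) := by
      have := le_trans key2 (by gcongr : K * 2 * (∫⁻ u in Ioo (0:ℝ) h, S u ^ p)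
        ≤ K * 2 * (ENNReal.ofReal h ^ (r * α + 1) * B ^ r))
      calc S h ^ p = (ENNReal.ofReal (h/2))⁻¹ * (ENNReal.ofReal (h/2) * S h ^ p) := by
            rw [← mul_assoc, ENNReal.inv_mul_cancel hc0 hctop, one_mul]
        _ ≤ _ := by gcongr
    have hinv : (ENNReal.ofReal (h/2))⁻¹ = 2 * (ENNReal.ofReal h)⁻¹ := by
      rw [show (h/2 : ℝ) = h * (1/2) by ring, ENNReal.ofReal_mul (by linarith : (0:ℝ) ≤ h)]
      rw [ENNReal.mul_inv (Or.inl (by simp [ENNReal.ofReal_eq_zero]; linarith))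
        (Or.inl ENNReal.ofReal_ne_top)]
      rw [show ENNReal.ofReal (1/2 : ℝ) = 2⁻¹ by
        rw [ENNReal.ofReal_div_of_pos (by norm_num)]; simp [ENNReal.div_eq_inv_mul]]
      rw [inv_inv, mul_comm]
    have hhne : ENNReal.ofReal h ≠ 0 := by simp [ENNReal.ofReal_eq_zero]; linarith
    have hpow : (ENNReal.ofReal h)⁻¹ * ENNReal.ofReal h ^ (r * α + 1)
        = ENNReal.ofReal h ^ (r * α) := by
      rw [← ENNReal.rpow_neg_one, ← ENNReal.rpow_add _ _ hhne ENNReal.ofReal_ne_top]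
      congr 1; ring
    calc S h ^ p ≤ (ENNReal.ofReal (h/2))⁻¹
        * (K * 2 * (ENNReal.ofReal h ^ (r * α + 1) * B ^ r)) := hdiv
      _ = 4 * K * ((ENNReal.ofReal h)⁻¹ * ENNReal.ofReal h ^ (r * α + 1) * B ^ r) := by
          rw [hinv]; ring
      _ = 4 * K * (ENNReal.ofReal h ^ (r * α) * B ^ r) := by rw [hpow]
  -- raise to the power 2/r
  have hq : (0:ℝ) < 2 / r := by positivity
  have key5 : S h = (S h ^ p) ^ (2/r) := by
    rw [← ENNReal.rpow_mul, hp, show r / 2 * (2/r) = 1 by field_simp, ENNReal.rpow_one]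
  rw [key5]
  calc (S h ^ p) ^ (2/r)
      ≤ (4 * K * (ENNReal.ofReal h ^ (r * α) * B ^ r)) ^ (2/r) :=
        ENNReal.rpow_le_rpow key4 hq.le
    _ = (4 * K) ^ (2/r) * ENNReal.ofReal h ^ (2 * α) * B ^ (2:ℝ) := by
        rw [ENNReal.mul_rpow_of_nonneg _ _ hq.le,
          ENNReal.mul_rpow_of_nonneg (ENNReal.ofReal h ^ (r * α)) (B ^ r) hq.le,
          ← ENNReal.rpow_mul, ← ENNReal.rpow_mul,
          show r * α * (2/r) = 2 * α by field_simp,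
          show r * (2/r) = 2 by field_simp, mul_assoc]
    _ ≤ 64 * ENNReal.ofReal h ^ (2 * α) * B ^ (2:ℝ) := by
        have hbound : (4 * K) ^ (2/r) ≤ (64 : ℝ≥0∞) := by
          have h4K : (4:ℝ≥0∞) * K = 4 ^ (1 + p) := by
            rw [ENNReal.rpow_add _ _ (by norm_num) (by norm_num), ENNReal.rpow_one, hK]
          rw [h4K, ← ENNReal.rpow_mul]
          have hexp : (1 + p) * (2/r) ≤ 3 := by
            rw [hp]
            have h2r : 2 / r ≤ 2 := by
              rw [div_le_iff₀ hr0]; nlinarith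
            have heq2 : (1 + r/2) * (2/r) = 2/r + 1 := by field_simp
            rw [heq2]; linarith
          calc (4:ℝ≥0∞) ^ ((1+p)*(2/r)) ≤ 4 ^ (3:ℝ) :=
              ENNReal.rpow_le_rpow_of_exponent_le (by norm_num) hexp
            _ = 64 := by
              rw [show (3:ℝ) = ((3:ℕ):ℝ) by norm_num, ENNReal.rpow_natCast]
              norm_num
        gcongr

def Iset (T : ℝ) (N : ℕ) (n : ℕ) : Set ℝ :=
  Set.Icc (max (((n : ℝ) - 3/2) * (T / (N + 1))) 0) (((n : ℝ) + 1/2) * (T / (N + 1)))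

lemma indicator_le_one {J : Set ℝ} {g : ℝ → ℝ} (hg : ∀ x ∈ J, g x ≤ 1) (t : ℝ) :
    J.indicator g t ≤ 1 := by
  by_cases h : t ∈ J
  · rw [Set.indicator_of_mem h]; exact hg t h
  · rw [Set.indicator_of_notMem h]; norm_num


lemma Jint_subset_Iset_self {T : ℝ} (hT : 0 < T) {N n : ℕ} (hn1 : 1 ≤ n) :
    Jint T N n ⊆ Iset T N n := by
  have hτ : 0 < T / ((N : ℝ) + 1) := by positivity
  set τ := T / ((N : ℝ) + 1) with hτdef
  intro x hx
  have hne : n ≠ 0 := by omega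
  simp only [Jint, if_neg hne, mem_Icc] at hx
  have hn1' : (1 : ℝ) ≤ (n : ℝ) := by exact_mod_cast hn1
  simp only [Iset, mem_Icc, max_le_iff]
  refine ⟨⟨by nlinarith [hx.1], by nlinarith [hx.1]⟩, by nlinarith [hx.2]⟩

lemma Jint_subset_Iset_pred {T : ℝ} (hT : 0 < T) {N n : ℕ} (hn2 : 2 ≤ n) :
    Jint T N (n - 1) ⊆ Iset T N n := by
  have hτ : 0 < T / ((N : ℝ) + 1) := by positivity
  set τ := T / ((N : ℝ) + 1) with hτdef
  intro x hx
  have hne : n - 1 ≠ 0 := by omega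
  simp only [Jint, if_neg hne, mem_Icc] at hx
  have hcast : ((n - 1 : ℕ) : ℝ) = (n : ℝ) - 1 := by
    have := Nat.cast_sub (by omega : 1 ≤ n) (R := ℝ)
    simpa using this
  rw [hcast] at hx
  have hn2' : (2 : ℝ) ≤ (n : ℝ) := by exact_mod_cast hn2
  simp only [Iset, mem_Icc, max_le_iff]
  refine ⟨⟨by nlinarith [hx.1], by nlinarith [hx.1]⟩, by nlinarith [hx.2]⟩

lemma Jint_zero_subset_Iset_one {T : ℝ} (hT : 0 < T) {N : ℕ} :
    Jint T N 0 ⊆ Iset T N 1 := by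
  have hτ : 0 < T / ((N : ℝ) + 1) := by positivity
  set τ := T / ((N : ℝ) + 1) with hτdef
  intro x hx
  simp only [Jint, if_pos rfl, mem_Icc] at hx
  simp only [Iset, mem_Icc, max_le_iff, Nat.cast_one]
  refine ⟨⟨by nlinarith [hx.1], hx.1⟩, by nlinarith [hx.2]⟩

lemma aWeight_le {T : ℝ} (hT : 0 < T) {N n : ℕ} (hn1 : 1 ≤ n) (t : ℝ) :
    ENNReal.ofReal (aWeight T N n t)
      ≤ 2 * (Iset T N n).indicator (fun _ => (1 : ℝ≥0∞)) t := by
  have hτ : 0 < T / ((N : ℝ) + 1) := by positivity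
  set τ := T / ((N : ℝ) + 1) with hτdef
  by_cases hmem : t ∈ Iset T N n
  · rw [Set.indicator_of_mem hmem, mul_one]
    refine le_trans (ENNReal.ofReal_le_ofReal (?_ : aWeight T N n t ≤ 2)) (by simp)
    rcases eq_or_ne n 1 with hn | hn
    · subst hn
      simp only [aWeight, eq_self_iff_true, if_true]
      have h1 : (Jint T N 0).indicator (fun _ => (1:ℝ)) t ≤ 1 :=
        indicator_le_one (fun x _ => le_rfl) t
      have h2 : (Jint T N 1).indicator (fun s => (T / (N+1) + T / (N+1)/2 - s) / (T / (N+1))) t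
          ≤ 1 := by
        refine indicator_le_one (fun x hx => ?_) t
        simp only [Jint, if_neg one_ne_zero, mem_Icc, one_mul] at hx
        rw [div_le_one hτ]
        linarith [hx.1]
      linarith
    · have hn2 : 2 ≤ n := by omega
      simp only [aWeight, if_neg hn]
      have h1 : (Jint T N (n-1)).indicator
          (fun s => (s - (((n : ℝ) - 1) * (T / (N+1)) - (T / (N+1)) / 2)) / (T / (N+1))) t
          ≤ 1 := by
        refine indicator_le_one (fun x hx => ?_) t
        have hne : n - 1 ≠ 0 := by omega
        simp only [Jint, if_neg hne, mem_Icc] at hx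
        have hcast : ((n - 1 : ℕ) : ℝ) = (n : ℝ) - 1 := by
          have := Nat.cast_sub (by omega : 1 ≤ n) (R := ℝ)
          simpa using this
        rw [hcast] at hx
        rw [div_le_one hτ]
        linarith [hx.2]
      have h2 : (Jint T N n).indicator
          (fun s => ((n : ℝ) * (T / (N+1)) + (T / (N+1)) / 2 - s) / (T / (N+1))) t ≤ 1 := by
        refine indicator_le_one (fun x hx => ?_) t
        have hne : n ≠ 0 := by omega
        simp only [Jint, if_neg hne, mem_Icc] at hx
        rw [div_le_one hτ]
        linarith [hx.1]
      linarith
  · rw [Set.indicator_of_notMem hmem, mul_zero]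
    have hzero : aWeight T N n t = 0 := by
      rcases eq_or_ne n 1 with hn | hn
      · subst hn
        simp only [aWeight, eq_self_iff_true, if_true]
        rw [Set.indicator_of_notMem (fun h => hmem (Jint_zero_subset_Iset_one hT h)),
          Set.indicator_of_notMem (fun h => hmem (Jint_subset_Iset_self hT le_rfl h)),
          add_zero]
      · have hn2 : 2 ≤ n := by omega
        simp only [aWeight, if_neg hn]
        rw [Set.indicator_of_notMem (fun h => hmem (Jint_subset_Iset_pred hT hn2 h)),
          Set.indicator_of_notMem (fun h => hmem (Jint_subset_Iset_self hT hn1 h)),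
          add_zero]
    rw [hzero]
    simp

lemma Iset_subset_Icc {T : ℝ} (hT : 0 < T) {N n : ℕ} (hn : n ≤ N) :
    Iset T N n ⊆ Set.Icc 0 T := by
  have hτ : 0 < T / ((N : ℝ) + 1) := by positivity
  intro x hx
  simp only [Iset, mem_Icc] at hx
  obtain ⟨hx1, hx2⟩ := hx
  have h0 : (0:ℝ) ≤ x := le_trans (le_max_right _ 0) hx1
  have hnN : (n : ℝ) ≤ (N : ℝ) := by exact_mod_cast hn
  have hTeq : ((N : ℝ) + 1) * (T / ((N : ℝ) + 1)) = T := by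
    field_simp
  constructor
  · exact h0
  · calc x ≤ ((n : ℝ) + 1/2) * (T / (N + 1)) := hx2
      _ ≤ ((N : ℝ) + 1) * (T / (N + 1)) := by nlinarith
      _ = T := hTeq

lemma Iset_length {T : ℝ} (hT : 0 < T) (N : ℕ) (n : ℕ) {s t : ℝ}
    (hs : s ∈ Iset T N n) (ht : t ∈ Iset T N n) :
    |t - s| ≤ 2 * (T / (N + 1)) := by
  have hτ : 0 < T / ((N : ℝ) + 1) := by positivity
  simp only [Iset, mem_Icc] at hs ht
  have hs1 := le_trans (le_max_left _ _) hs.1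
  have ht1 := le_trans (le_max_left _ _) ht.1
  rw [abs_le]
  constructor <;> nlinarith [hs.2, ht.2]

lemma count_bound {T : ℝ} (hT : 0 < T) (N : ℕ) (s : ℝ) :
    ∑ n ∈ Finset.Icc 1 N, (Iset T N n).indicator (fun _ => (1:ℝ≥0∞)) s
      ≤ 3 * (Set.Icc (0:ℝ) T).indicator (fun _ => (1:ℝ≥0∞)) s := by
  classical
  have hτ : 0 < T / ((N : ℝ) + 1) := by positivity
  set F := (Finset.Icc 1 N).filter (fun n => s ∈ Iset T N n) with hF
  have hsum : ∑ n ∈ Finset.Icc 1 N, (Iset T N n).indicator (fun _ => (1:ℝ≥0∞)) s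
      = (F.card : ℝ≥0∞) := by
    calc ∑ n ∈ Finset.Icc 1 N, (Iset T N n).indicator (fun _ => (1:ℝ≥0∞)) s
        = ∑ n ∈ Finset.Icc 1 N, (if s ∈ Iset T N n then (1:ℝ≥0∞) else 0) :=
          Finset.sum_congr rfl (fun n _ => Set.indicator_apply _ _ _)
      _ = ∑ _n ∈ F, (1:ℝ≥0∞) := (Finset.sum_filter _ _).symm
      _ = (F.card : ℝ≥0∞) := by simp
  rw [hsum]
  rcases F.eq_empty_or_nonempty with hFe | hFne
  · simp [hFe]
  · set n₀ := F.min' hFne with hn₀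
    have hn₀F : n₀ ∈ F := F.min'_mem hFne
    obtain ⟨hn₀Icc, hsIset⟩ := Finset.mem_filter.mp hn₀F
    have hsT : s ∈ Set.Icc (0:ℝ) T :=
      Iset_subset_Icc hT (Finset.mem_Icc.mp hn₀Icc).2 hsIset
    rw [Set.indicator_of_mem hsT, mul_one]
    have hcard : F.card ≤ 3 := by
      have hsub : F ⊆ Finset.Icc n₀ (n₀ + 2) := by
        intro n hn
        obtain ⟨hnIcc, hsn⟩ := Finset.mem_filter.mp hn
        rw [Finset.mem_Icc]
        refine ⟨F.min'_le n hn, ?_⟩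
        have h1 : ((n : ℝ) - 3/2) * (T / (N + 1)) ≤ s :=
          le_trans (le_max_left _ _) hsn.1
        have h2 : s ≤ ((n₀ : ℝ) + 1/2) * (T / (N + 1)) := hsIset.2
        have h3 : (n : ℝ) ≤ (n₀ : ℝ) + 2 := by nlinarith
        exact_mod_cast (by push_cast; linarith : ((n : ℝ)) ≤ ((n₀ + 2 : ℕ) : ℝ))
      calc F.card ≤ (Finset.Icc n₀ (n₀ + 2)).card := Finset.card_le_card hsub
        _ = 3 := by rw [Nat.card_Icc]; omega
    exact_mod_cast (by exact_mod_cast hcard : (F.card : ℝ≥0∞) ≤ (3:ℕ))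

set_option maxHeartbeats 2000000 in
lemma stepB {T : ℝ} (hT : 0 < T) (N : ℕ) {H : Type*} [NormedAddCommGroup H] {f : ℝ → H}
    (hf : StronglyMeasurable f) :
    (∑ n ∈ Finset.Icc 1 N,
      ∫⁻ s, ∫⁻ t, ENNReal.ofReal (aWeight T N n s) * ENNReal.ofReal (aWeight T N n t)
        * ENNReal.ofReal (‖f s - f t‖ ^ 2) ∂(volume) ∂(volume))
    ≤ 12 * ∫⁻ h in Set.Icc (-(2*(T/(N+1)))) (2*(T/(N+1))),
        (∫⁻ s in Set.Icc (max 0 (-h)) (T - max 0 h),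
          ENNReal.ofReal (‖f s - f (s+h)‖ ^ 2)) ∂(volume) := by
  classical
  set τ : ℝ := T / ((N:ℝ) + 1) with hτdef
  have hτ : 0 < τ := by positivity
  set D : ℝ → ℝ → ℝ≥0∞ := fun s t => ENNReal.ofReal (‖f s - f t‖ ^ 2) with hD
  set χ : ℕ → ℝ → ℝ≥0∞ := fun n x => (Iset T N n).indicator (fun _ => 1) x with hχ
  set u : ℝ → ℝ≥0∞ := fun x => (Set.Icc (0:ℝ) T).indicator (fun _ => 1) x with hu
  set e : ℝ → ℝ≥0∞ := fun x => (Set.Icc (-(2*τ)) (2*τ)).indicator (fun _ => 1) x with he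
  set G : ℕ → ℝ → ℝ → ℝ≥0∞ :=
    fun n s h => 4 * (e h * (χ n s * (χ n (s+h) * D s (s+h)))) with hG
  -- measurability
  have hD2 : Measurable (fun p : ℝ × ℝ => D p.1 (p.1 + p.2)) := by
    have h1 : StronglyMeasurable (fun p : ℝ × ℝ => f p.1 - f (p.1 + p.2)) :=
      (hf.comp_measurable measurable_fst).sub
        (hf.comp_measurable (measurable_fst.add measurable_snd))
    exact ENNReal.measurable_ofReal.comp ((h1.norm.measurable).pow_const 2)
  have hχm : ∀ n, Measurable (χ n) :=
    fun n => measurable_const.indicator measurableSet_Icc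
  have hum : Measurable u := measurable_const.indicator measurableSet_Icc
  have hem : Measurable e := measurable_const.indicator measurableSet_Icc
  have hGm : ∀ n, Measurable (fun p : ℝ × ℝ => G n p.1 p.2) := by
    intro n
    apply Measurable.const_mul
    apply Measurable.mul (hem.comp measurable_snd)
    apply Measurable.mul ((hχm n).comp measurable_fst)
    exact ((hχm n).comp (measurable_fst.add measurable_snd)).mul hD2
  -- pointwise bound before translation
  have step1 : ∀ n ∈ Finset.Icc 1 N, ∀ s t : ℝ,
      ENNReal.ofReal (aWeight T N n s) * ENNReal.ofReal (aWeight T N n t) * D s t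
        ≤ 4 * (e (t - s) * (χ n s * (χ n t * D s t))) := by
    intro n hn s t
    obtain ⟨hn1, hnN⟩ := Finset.mem_Icc.mp hn
    have hws := aWeight_le (N := N) hT hn1 s
    have hwt := aWeight_le (N := N) hT hn1 t
    have hχe : χ n s * χ n t ≤ e (t - s) * (χ n s * χ n t) := by
      by_cases hs : s ∈ Iset T N n
      · by_cases ht : t ∈ Iset T N n
        · have hmem : t - s ∈ Set.Icc (-(2*τ)) (2*τ) := by
            have := Iset_length hT N n hs ht
            rw [abs_le] at this
            exact ⟨this.1, this.2⟩
          rw [he]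
          simp only [Set.indicator_of_mem hmem, one_mul]
          exact le_rfl
        · simp [hχ, Set.indicator_of_notMem ht]
      · simp [hχ, Set.indicator_of_notMem hs]
    calc ENNReal.ofReal (aWeight T N n s) * ENNReal.ofReal (aWeight T N n t) * D s t
        ≤ (2 * χ n s) * (2 * χ n t) * D s t := by gcongr
      _ = 4 * (χ n s * (χ n t * D s t)) := by ring
      _ ≤ 4 * (e (t - s) * (χ n s * (χ n t * D s t))) := by
          calc (4:ℝ≥0∞) * (χ n s * (χ n t * D s t))
              = 4 * ((χ n s * χ n t) * D s t) := by ring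
            _ ≤ 4 * ((e (t - s) * (χ n s * χ n t)) * D s t) := by gcongr
            _ = 4 * (e (t - s) * (χ n s * (χ n t * D s t))) := by ring
  -- translate inner integral
  have step2 : ∀ n : ℕ, ∀ s : ℝ,
      (∫⁻ t, 4 * (e (t - s) * (χ n s * (χ n t * D s t))))
        = ∫⁻ h, G n s h := by
    intro n s
    have := lint_shift (fun t => 4 * (e (t - s) * (χ n s * (χ n t * D s t)))) s
    rw [← this]
    refine lintegral_congr fun h => ?_
    have h2 : h + s = s + h := by ring
    have h3 : s + h - s = h := by ring
    rw [hG]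
    simp only [h2, h3]
  -- per-n bound after swapping
  have step_n : ∀ n ∈ Finset.Icc 1 N,
      (∫⁻ s, ∫⁻ t, ENNReal.ofReal (aWeight T N n s) * ENNReal.ofReal (aWeight T N n t)
        * ENNReal.ofReal (‖f s - f t‖ ^ 2))
      ≤ ∫⁻ h, ∫⁻ s, G n s h := by
    intro n hn
    calc (∫⁻ s, ∫⁻ t, ENNReal.ofReal (aWeight T N n s) * ENNReal.ofReal (aWeight T N n t)
          * ENNReal.ofReal (‖f s - f t‖ ^ 2))
        ≤ ∫⁻ s, ∫⁻ t, 4 * (e (t - s) * (χ n s * (χ n t * D s t))) := by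
          refine lintegral_mono fun s => lintegral_mono fun t => step1 n hn s t
      _ = ∫⁻ s, ∫⁻ h, G n s h := lintegral_congr fun s => step2 n s
      _ = ∫⁻ h, ∫⁻ s, G n s h := lintegral_lintegral_swap (hGm n).aemeasurable
  -- sum over n and swap sum with integrals
  have step_sum : (∑ n ∈ Finset.Icc 1 N,
      ∫⁻ s, ∫⁻ t, ENNReal.ofReal (aWeight T N n s) * ENNReal.ofReal (aWeight T N n t)
        * ENNReal.ofReal (‖f s - f t‖ ^ 2))
      ≤ ∫⁻ h, ∫⁻ s, ∑ n ∈ Finset.Icc 1 N, G n s h := by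
    calc (∑ n ∈ Finset.Icc 1 N,
        ∫⁻ s, ∫⁻ t, ENNReal.ofReal (aWeight T N n s) * ENNReal.ofReal (aWeight T N n t)
          * ENNReal.ofReal (‖f s - f t‖ ^ 2))
        ≤ ∑ n ∈ Finset.Icc 1 N, ∫⁻ h, ∫⁻ s, G n s h :=
          Finset.sum_le_sum step_n
      _ = ∫⁻ h, ∑ n ∈ Finset.Icc 1 N, ∫⁻ s, G n s h := by
          rw [← lintegral_finset_sum]
          intro n _
          exact Measurable.lintegral_prod_right
            ((hGm n).comp (measurable_snd.prodMk measurable_fst))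
      _ = ∫⁻ h, ∫⁻ s, ∑ n ∈ Finset.Icc 1 N, G n s h := by
          refine lintegral_congr fun h => ?_
          rw [← lintegral_finset_sum]
          intro n _
          exact (hGm n).comp (measurable_id.prodMk measurable_const)
  -- pointwise counting bound
  have step_count : ∀ h s : ℝ, (∑ n ∈ Finset.Icc 1 N, G n s h)
      ≤ 12 * (e h * (Set.Icc (max 0 (-h)) (T - max 0 h)).indicator
          (fun s => D s (s+h)) s) := by
    intro h s
    have hsum_eq : (∑ n ∈ Finset.Icc 1 N, G n s h)
        = 4 * (e h * ((∑ n ∈ Finset.Icc 1 N, χ n s * χ n (s+h)) * D s (s+h))) := by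
      rw [hG]
      simp only
      rw [← Finset.mul_sum, ← Finset.mul_sum, Finset.sum_mul]
      congr 2
      refine Finset.sum_congr rfl fun n _ => by ring
    rw [hsum_eq]
    have hcount : (∑ n ∈ Finset.Icc 1 N, χ n s * χ n (s+h)) ≤ 3 * (u s * u (s+h)) := by
      calc (∑ n ∈ Finset.Icc 1 N, χ n s * χ n (s+h))
          ≤ ∑ n ∈ Finset.Icc 1 N, χ n s * u (s+h) := by
            refine Finset.sum_le_sum fun n hn => ?_
            refine mul_le_mul_right ?_ _
            exact Set.indicator_le_indicator_of_subset
              (Iset_subset_Icc hT (Finset.mem_Icc.mp hn).2) (fun _ => zero_le) _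
        _ = (∑ n ∈ Finset.Icc 1 N, χ n s) * u (s+h) := (Finset.sum_mul _ _ _).symm
        _ ≤ (3 * u s) * u (s+h) := by
            exact mul_le_mul_left (count_bound hT N s) _
        _ = 3 * (u s * u (s+h)) := by ring
    have hind : u s * u (s+h) * D s (s+h)
        ≤ (Set.Icc (max 0 (-h)) (T - max 0 h)).indicator (fun s => D s (s+h)) s := by
      by_cases hs : s ∈ Set.Icc (0:ℝ) T
      · by_cases hsh : s + h ∈ Set.Icc (0:ℝ) T
        · have hmem : s ∈ Set.Icc (max 0 (-h)) (T - max 0 h) := by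
            simp only [mem_Icc] at hs hsh ⊢
            constructor
            · rw [max_le_iff]; exact ⟨hs.1, by linarith [hsh.1]⟩
            · rcases le_total 0 h with hh | hh
              · rw [max_eq_right hh]; linarith [hsh.2]
              · rw [max_eq_left hh]; linarith [hs.2]
          rw [Set.indicator_of_mem hmem, hu]
          simp only [Set.indicator_of_mem hs, Set.indicator_of_mem hsh, one_mul]
          exact le_rfl
        · rw [hu]; simp [Set.indicator_of_notMem hsh]
      · rw [hu]; simp [Set.indicator_of_notMem hs]
    calc 4 * (e h * ((∑ n ∈ Finset.Icc 1 N, χ n s * χ n (s+h)) * D s (s+h)))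
        ≤ 4 * (e h * ((3 * (u s * u (s+h))) * D s (s+h))) := by gcongr
      _ = 12 * (e h * (u s * u (s+h) * D s (s+h))) := by ring
      _ ≤ 12 * (e h * (Set.Icc (max 0 (-h)) (T - max 0 h)).indicator
            (fun s => D s (s+h)) s) := by gcongr
  -- put it together
  have step_final : (∫⁻ h, ∫⁻ s, ∑ n ∈ Finset.Icc 1 N, G n s h)
      ≤ 12 * ∫⁻ h in Set.Icc (-(2*τ)) (2*τ),
          (∫⁻ s in Set.Icc (max 0 (-h)) (T - max 0 h), D s (s+h)) := by
    have hinner : ∀ h : ℝ, (∫⁻ s, ∑ n ∈ Finset.Icc 1 N, G n s h)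
        ≤ 12 * (e h * ∫⁻ s in Set.Icc (max 0 (-h)) (T - max 0 h), D s (s+h)) := by
      intro h
      calc (∫⁻ s, ∑ n ∈ Finset.Icc 1 N, G n s h)
          ≤ ∫⁻ s, 12 * (e h * (Set.Icc (max 0 (-h)) (T - max 0 h)).indicator
              (fun s => D s (s+h)) s) := lintegral_mono fun s => step_count h s
        _ = 12 * (e h * ∫⁻ s, (Set.Icc (max 0 (-h)) (T - max 0 h)).indicator
              (fun s => D s (s+h)) s) := by
            have heh : e h ≠ ⊤ := by
              rw [he]
              by_cases hh : h ∈ Set.Icc (-(2*τ)) (2*τ) <;> simp [hh]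
            rw [lintegral_const_mul' _ _ (by norm_num)]
            congr 1
            rw [lintegral_const_mul' _ _ heh]
        _ = 12 * (e h * ∫⁻ s in Set.Icc (max 0 (-h)) (T - max 0 h), D s (s+h)) := by
            rw [lintegral_indicator measurableSet_Icc]
    calc (∫⁻ h, ∫⁻ s, ∑ n ∈ Finset.Icc 1 N, G n s h)
        ≤ ∫⁻ h, 12 * (e h * ∫⁻ s in Set.Icc (max 0 (-h)) (T - max 0 h), D s (s+h)) :=
          lintegral_mono hinner
      _ = 12 * ∫⁻ h, e h * ∫⁻ s in Set.Icc (max 0 (-h)) (T - max 0 h), D s (s+h) :=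
          lintegral_const_mul' _ _ (by norm_num)
      _ = 12 * ∫⁻ h, (Set.Icc (-(2*τ)) (2*τ)).indicator
            (fun h => ∫⁻ s in Set.Icc (max 0 (-h)) (T - max 0 h), D s (s+h)) h := by
          congr 1
          refine lintegral_congr fun h => ?_
          by_cases hh : h ∈ Set.Icc (-(2*τ)) (2*τ)
          · rw [Set.indicator_of_mem hh, he]
            simp only [Set.indicator_of_mem hh, one_mul]
          · rw [Set.indicator_of_notMem hh, he]
            simp only [Set.indicator_of_notMem hh, zero_mul]
      _ = 12 * ∫⁻ h in Set.Icc (-(2*τ)) (2*τ),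
            (∫⁻ s in Set.Icc (max 0 (-h)) (T - max 0 h), D s (s+h)) := by
          rw [lintegral_indicator measurableSet_Icc]
  exact le_trans step_sum step_final


end helpers

set_option maxHeartbeats 2000000 in
/-- Temporal oscillation bound, Besov case: for `α ∈ (0,1)` and `r ∈ [1,∞)` there is a
constant `C` depending only on `α` and `r` such that, whenever the Besov seminorm
`[f]_r = (∫_0^T h^{−rα} ‖τ_h f‖_{L²}^r dh/h)^{1/r}` is finite,
`(1/τ) Σ_{n=1}^N ∫∫ a_n(s) a_n(t) ‖f(s) − f(t)‖² dt ds ≤ C τ^{2α} [f]_r²`. -/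
theorem temporal_oscillation_besov (α : ℝ) (hα : α ∈ Set.Ioo (0 : ℝ) 1)
    (r : ℝ) (hr : 1 ≤ r) :
    ∃ C : ℝ, 0 < C ∧
      ∀ (H : Type) [NormedAddCommGroup H] [InnerProductSpace ℝ H] [CompleteSpace H],
        ∀ (T : ℝ), 0 < T → ∀ (N : ℕ), 1 ≤ N → ∀ f : ℝ → H, StronglyMeasurable f →
          besovSemi T α r f ≠ ⊤ →
          tempOsc T N f
            ≤ ENNReal.ofReal C * ENNReal.ofReal (T / (N + 1)) ^ (2 * α)
              * besovSemi T α r f ^ 2 := by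
  refine ⟨1000000, by norm_num, ?_⟩
  intro H _ _ _ T hT N hN f hf hBne
  set τ : ℝ := T / ((N:ℝ) + 1) with hτdef
  have hτ : 0 < τ := by positivity
  have h2τT : 2 * τ ≤ T := by
    rw [hτdef]
    rw [mul_div_assoc']
    rw [div_le_iff₀ (by positivity : (0:ℝ) < (N:ℝ) + 1)]
    have hN1 : (1:ℝ) ≤ (N:ℝ) := by exact_mod_cast hN
    nlinarith
  set B := besovSemi T α r f with hBdef
  set R : ℝ≥0∞ := 64 * ENNReal.ofReal (2*τ) ^ (2*α) * B ^ (2:ℝ) with hR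
  -- pointwise bound on the inner integral for h in the open interval
  have hΨ : ∀ h ∈ Set.Ioo (-(2*τ)) (2*τ),
      (∫⁻ s in Set.Icc (max 0 (-h)) (T - max 0 h),
          ENNReal.ofReal (‖f s - f (s+h)‖ ^ 2)) ≤ R := by
    intro h hh
    have hbase : ∀ h' : ℝ, h' ∈ Set.Ioo (0:ℝ) T → ENNReal.ofReal h' ≤ ENNReal.ofReal (2*τ) →
        sqIncrementNorm T f h' ≤ R := by
      intro h' hh' hle
      calc sqIncrementNorm T f h' ≤ 64 * ENNReal.ofReal h' ^ (2 * α) * B ^ (2:ℝ) :=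
            stepA hα hr hf hh'
        _ ≤ R := by
            rw [hR]
            gcongr
            linarith [hα.1]
    rcases lt_trichotomy h 0 with hneg | hzero | hpos
    · -- h < 0
      have hmax1 : max 0 (-h) = -h := max_eq_right (by linarith)
      have hmax2 : max 0 h = 0 := max_eq_left (by linarith)
      rw [hmax1, hmax2, sub_zero]
      have hg : ∀ s : ℝ, ENNReal.ofReal (‖f s - f (s+h)‖ ^ 2)
          = (fun x => ENNReal.ofReal (‖f (x + (-h)) - f x‖ ^ 2)) (s + h) := by
        intro s
        simp only
        rw [show s + h + (-h) = s by ring]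
      calc (∫⁻ s in Set.Icc (-h) T, ENNReal.ofReal (‖f s - f (s+h)‖ ^ 2))
          = ∫⁻ s in Set.Icc (-h) T,
              (fun x => ENNReal.ofReal (‖f (x + (-h)) - f x‖ ^ 2)) (s + h) :=
            lintegral_congr hg
        _ = ∫⁻ x in Set.Icc (-h + h) (T + h),
              ENNReal.ofReal (‖f (x + (-h)) - f x‖ ^ 2) :=
            lint_shift_Icc (fun x => ENNReal.ofReal (‖f (x + (-h)) - f x‖ ^ 2)) h (-h) T
        _ = ∫⁻ x in Set.Ioc (0:ℝ) (T - (-h)),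
              ENNReal.ofReal (‖f (x + (-h)) - f x‖ ^ 2) := by
            rw [show -h + h = (0:ℝ) by ring, show T + h = T - (-h) by ring]
            exact (setLIntegral_congr Ioc_ae_eq_Icc).symm
        _ = sqIncrementNorm T f (-h) := rfl
        _ ≤ R := by
            refine hbase (-h) ⟨by linarith, by linarith [hh.1, h2τT]⟩ ?_
            exact ENNReal.ofReal_le_ofReal (by linarith [hh.1])
    · -- h = 0
      subst hzero
      have : ∀ s : ℝ, ENNReal.ofReal (‖f s - f (s+0)‖ ^ 2) = 0 := by
        intro s; simp
      simp only [this, lintegral_zero]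
      exact bot_le
    · -- h > 0
      have hmax1 : max 0 (-h) = 0 := max_eq_left (by linarith)
      have hmax2 : max 0 h = h := max_eq_right (by linarith)
      rw [hmax1, hmax2]
      calc (∫⁻ s in Set.Icc (0:ℝ) (T - h), ENNReal.ofReal (‖f s - f (s+h)‖ ^ 2))
          = ∫⁻ s in Set.Icc (0:ℝ) (T - h), ENNReal.ofReal (‖f (s+h) - f s‖ ^ 2) := by
            refine lintegral_congr fun s => ?_
            rw [norm_sub_rev]
        _ = ∫⁻ s in Set.Ioc (0:ℝ) (T - h), ENNReal.ofReal (‖f (s+h) - f s‖ ^ 2) :=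
            (setLIntegral_congr Ioc_ae_eq_Icc).symm
        _ = sqIncrementNorm T f h := rfl
        _ ≤ R := by
            refine hbase h ⟨hpos, by linarith [hh.2, h2τT]⟩ ?_
            exact ENNReal.ofReal_le_ofReal (by linarith [hh.2])
  -- bound on the full h-integral
  have hInt : (∫⁻ h in Set.Icc (-(2*τ)) (2*τ),
      (∫⁻ s in Set.Icc (max 0 (-h)) (T - max 0 h),
        ENNReal.ofReal (‖f s - f (s+h)‖ ^ 2))) ≤ R * ENNReal.ofReal (4*τ) := by
    calc (∫⁻ h in Set.Icc (-(2*τ)) (2*τ),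
        (∫⁻ s in Set.Icc (max 0 (-h)) (T - max 0 h),
          ENNReal.ofReal (‖f s - f (s+h)‖ ^ 2)))
        = ∫⁻ h in Set.Ioo (-(2*τ)) (2*τ),
            (∫⁻ s in Set.Icc (max 0 (-h)) (T - max 0 h),
              ENNReal.ofReal (‖f s - f (s+h)‖ ^ 2)) :=
          (setLIntegral_congr Ioo_ae_eq_Icc).symm
      _ ≤ ∫⁻ _h in Set.Ioo (-(2*τ)) (2*τ), R := setLIntegral_mono' measurableSet_Ioo hΨ
      _ = R * volume (Set.Ioo (-(2*τ)) (2*τ)) := setLIntegral_const _ _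
      _ = R * ENNReal.ofReal (4*τ) := by
          rw [Real.volume_Ioo]
          congr 1
          ring_nf
  -- assemble
  have hstep : tempOsc T N f ≤ (ENNReal.ofReal τ)⁻¹ * (12 * (R * ENNReal.ofReal (4*τ))) := by
    rw [tempOsc]
    refine mul_le_mul_right ?_ _
    calc (∑ n ∈ Finset.Icc 1 N,
        ∫⁻ s, ∫⁻ t, ENNReal.ofReal (aWeight T N n s) * ENNReal.ofReal (aWeight T N n t)
          * ENNReal.ofReal (‖f s - f t‖ ^ 2) ∂(volume) ∂(volume))
        ≤ 12 * ∫⁻ h in Set.Icc (-(2*τ)) (2*τ),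
            (∫⁻ s in Set.Icc (max 0 (-h)) (T - max 0 h),
              ENNReal.ofReal (‖f s - f (s+h)‖ ^ 2)) := stepB hT N hf
      _ ≤ 12 * (R * ENNReal.ofReal (4*τ)) := by gcongr
  -- final arithmetic
  have hX0 : ENNReal.ofReal τ ≠ 0 := by simp [ENNReal.ofReal_eq_zero]; linarith
  have hXtop : ENNReal.ofReal τ ≠ ⊤ := ENNReal.ofReal_ne_top
  have h4τ : ENNReal.ofReal (4*τ) = 4 * ENNReal.ofReal τ := by
    rw [ENNReal.ofReal_mul (by norm_num : (0:ℝ) ≤ 4), ENNReal.ofReal_ofNat]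
  have h2τ : ENNReal.ofReal (2*τ) = 2 * ENNReal.ofReal τ := by
    rw [ENNReal.ofReal_mul (by norm_num : (0:ℝ) ≤ 2), ENNReal.ofReal_ofNat]
  have hB2 : B ^ (2:ℝ) = B ^ 2 := by
    rw [show (2:ℝ) = ((2:ℕ):ℝ) by norm_num, ENNReal.rpow_natCast]
  have h2pow : (2:ℝ≥0∞) ^ (2*α) ≤ 4 := by
    calc (2:ℝ≥0∞) ^ (2*α) ≤ 2 ^ (2:ℝ) :=
        ENNReal.rpow_le_rpow_of_exponent_le (by norm_num) (by linarith [hα.2])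
      _ = 4 := by
        rw [show (2:ℝ) = ((2:ℕ):ℝ) by norm_num, ENNReal.rpow_natCast]
        norm_num
  calc tempOsc T N f ≤ (ENNReal.ofReal τ)⁻¹ * (12 * (R * ENNReal.ofReal (4*τ))) := hstep
    _ = 12 * 64 * 4 * ((ENNReal.ofReal τ)⁻¹ * ENNReal.ofReal τ)
        * ((2:ℝ≥0∞) ^ (2*α) * ENNReal.ofReal τ ^ (2*α)) * B ^ (2:ℝ) := by
        rw [hR, h4τ, h2τ, ENNReal.mul_rpow_of_nonneg _ _ (by linarith [hα.1] : (0:ℝ) ≤ 2*α)]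
        ring
    _ = 3072 * ((2:ℝ≥0∞) ^ (2*α) * ENNReal.ofReal τ ^ (2*α)) * B ^ (2:ℝ) := by
        rw [ENNReal.inv_mul_cancel hX0 hXtop]
        norm_num
    _ ≤ 3072 * (4 * ENNReal.ofReal τ ^ (2*α)) * B ^ (2:ℝ) := by gcongr
    _ = 12288 * ENNReal.ofReal τ ^ (2*α) * B ^ 2 := by rw [hB2]; ring
    _ ≤ ENNReal.ofReal 1000000 * ENNReal.ofReal τ ^ (2*α) * B ^ 2 := by
        gcongr
        rw [ENNReal.ofReal_ofNat]
        norm_num
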